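/- Let G be a graph, T a tree, f : G → T a graph homomorphism, n ≥ 1 an integer, and let η and η′ be multi-homomorphisms from G to T with η ≤ η′, both satisfying d_T(f(z), y) ≤ 2n for every z ∈ V(G) and every y in the assigned set. Then: (1) every directed edge of η is a directed edge of η′; (2) if (x,x′) is a directed edge of η′ and there exists an edge (x′,x″) ∈ E(G) that is a directed edge of η′ (i.e., x′ is not a sink of the directed graph determined by η′), then (x,x′) is a directed edge of η. -/

import Mathlib

structure Graph' where
  V : Type
  E : V → V → Prop
  symm : ∀ {x y}, E x y → E y x

def IsGraphHom (G H : Graph') (f : G.V → H.V) : Prop :=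
  ∀ {x y}, G.E x y → H.E (f x) (f y)

structure Walk (G : Graph') (a b : G.V) where
  len : ℕ
  toFun : ℕ → G.V
  start_eq : toFun 0 = a
  end_eq : toFun len = b
  adj : ∀ i, i < len → G.E (toFun i) (toFun (i + 1))

structure MultiHom (G H : Graph') where
  toFun : G.V → Set H.V
  nonempty : ∀ x, (toFun x).Nonempty
  edge : ∀ {x y}, G.E x y → ∀ a ∈ toFun x, ∀ b ∈ toFun y, H.E a b

def MultiHom.le {G H : Graph'} (η η' : MultiHom G H) : Prop :=
  ∀ x, η.toFun x ⊆ η'.toFun x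

def SameComponent {G H : Graph'} (η η' : MultiHom G H) : Prop :=
  Relation.ReflTransGen (fun a b => MultiHom.le a b ∨ MultiHom.le b a) η η'

def ofHom {G H : Graph'} (f : G.V → H.V) (hf : IsGraphHom G H f) : MultiHom G H where
  toFun x := {f x}
  nonempty x := ⟨f x, rfl⟩
  edge := by
    intro x y hxy a ha b hb
    rw [Set.mem_singleton_iff] at ha hb
    subst ha; subst hb
    exact hf hxy

def prodI (G : Graph') (n : ℕ) : Graph' where
  V := G.V × Fin (n + 1)
  E := fun p q => G.E p.1 q.1 ∧ p.2.val ≤ q.2.val + 1 ∧ q.2.val ≤ p.2.val + 1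
  symm := by
    rintro p q ⟨h1, h2, h3⟩
    exact ⟨G.symm h1, h3, h2⟩

def MoveA {G : Graph'} {a b : G.V} (γ δ : Walk G a b) : Prop :=
  δ.len = γ.len + 2 ∧ ∃ k ≤ γ.len,
    (∀ i ≤ k, δ.toFun i = γ.toFun i) ∧
    (∀ i, k ≤ i → i ≤ γ.len → δ.toFun (i + 2) = γ.toFun i)

def MoveB {G : Graph'} {a b : G.V} (γ δ : Walk G a b) : Prop :=
  γ.len = δ.len ∧ ∃ j, ∀ i ≤ γ.len, i ≠ j → γ.toFun i = δ.toFun i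

def Eqv1 {G : Graph'} {a b : G.V} : Walk G a b → Walk G a b → Prop :=
  Relation.EqvGen MoveA

def Eqv2 {G : Graph'} {a b : G.V} : Walk G a b → Walk G a b → Prop :=
  Relation.EqvGen (fun γ δ => MoveA γ δ ∨ MoveB γ δ)

noncomputable def Graph'.dist (G : Graph') (a b : G.V) : ℕ :=
  sInf {n | ∃ γ : Walk G a b, γ.len = n}

def Graph'.Connected (G : Graph') : Prop := ∀ a b : G.V, Nonempty (Walk G a b)

def Graph'.Bipartite (G : Graph') : Prop :=
  ∃ c : G.V → ZMod 2, ∀ {x y}, G.E x y → c x ≠ c y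

def constWalk {G : Graph'} (a : G.V) : Walk G a a :=
  ⟨0, fun _ => a, rfl, rfl, fun i hi => absurd hi (by omega)⟩

def Walk.concat {G : Graph'} {a b c : G.V} (γ : Walk G a b) (δ : Walk G b c) :
    Walk G a c where
  len := γ.len + δ.len
  toFun i := if i ≤ γ.len then γ.toFun i else δ.toFun (i - γ.len)
  start_eq := by simp [γ.start_eq]
  end_eq := by
    by_cases h : δ.len = 0
    · have hbc : b = c := by
        have h1 := δ.end_eq
        rw [h, δ.start_eq] at h1
        exact h1
      simp [h, γ.end_eq, hbc]
    · have h1 : ¬ (γ.len + δ.len ≤ γ.len) := by omega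
      (try dsimp only)
      rw [if_neg h1]
      have h2 : γ.len + δ.len - γ.len = δ.len := by omega
      rw [h2, δ.end_eq]
  adj := by
    intro i hi
    (try dsimp only)
    rcases lt_trichotomy i γ.len with h | h | h
    · rw [if_pos (by omega : i ≤ γ.len), if_pos (by omega : i + 1 ≤ γ.len)]
      exact γ.adj i h
    · have hδ : 0 < δ.len := by omega
      rw [if_pos (by omega : i ≤ γ.len), if_neg (by omega : ¬ i + 1 ≤ γ.len)]
      have h2 : i + 1 - γ.len = 1 := by omega
      rw [h2, h, γ.end_eq]
      have h3 := δ.adj 0 hδ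
      rw [δ.start_eq] at h3
      exact h3
    · rw [if_neg (by omega : ¬ i ≤ γ.len), if_neg (by omega : ¬ i + 1 ≤ γ.len)]
      have h2 : i + 1 - γ.len = (i - γ.len) + 1 := by omega
      rw [h2]
      exact δ.adj (i - γ.len) (by omega)

def Walk.reverse {G : Graph'} {a b : G.V} (γ : Walk G a b) : Walk G b a where
  len := γ.len
  toFun i := γ.toFun (γ.len - i)
  start_eq := by simp [γ.end_eq]
  end_eq := by simp [γ.start_eq]
  adj := by
    intro i hi
    have h1 : γ.len - i = (γ.len - (i + 1)) + 1 := by omega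
    have h2 := γ.adj (γ.len - (i + 1)) (by omega)
    rw [← h1] at h2
    exact G.symm h2

def Walk.map {G H : Graph'} (f : G.V → H.V) (hf : IsGraphHom G H f) {a b : G.V}
    (γ : Walk G a b) : Walk H (f a) (f b) where
  len := γ.len
  toFun i := f (γ.toFun i)
  start_eq := by (try dsimp only); rw [γ.start_eq]
  end_eq := by (try dsimp only); rw [γ.end_eq]
  adj := fun i hi => hf (γ.adj i hi)

def Walk.pow {G : Graph'} {a : G.V} (γ : Walk G a a) : ℕ → Walk G a a
  | 0 => constWalk a
  | n + 1 => (Walk.pow γ n).concat γ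

def Walk.zpow {G : Graph'} {a : G.V} (γ : Walk G a a) : ℤ → Walk G a a
  | Int.ofNat n => γ.pow n
  | Int.negSucc n => γ.reverse.pow (n + 1)
def finClip (n t : ℕ) : Fin (n + 1) := ⟨min t n, by omega⟩

def realizedWalk {G H : Graph'} {n : ℕ} (h : (prodI G n).V → H.V)
    (hh : IsGraphHom (prodI G n) H h) {v v' : G.V} (hvv' : G.E v v')
    {w : H.V} (h0 : h (v, finClip n 0) = w) (hN : h (v, finClip n n) = w) :
    Walk H w w where
  len := 2 * n
  toFun i := if i % 2 = 0 then h (v, finClip n (i / 2)) else h (v', finClip n (i / 2))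
  start_eq := by
    (try dsimp only)
    rw [if_pos (by norm_num : (0:ℕ) % 2 = 0), Nat.zero_div]
    exact h0
  end_eq := by
    (try dsimp only)
    rw [if_pos (by omega : (2 * n) % 2 = 0)]
    have h2 : 2 * n / 2 = n := by omega
    rw [h2]
    exact hN
  adj := by
    intro i hi
    (try dsimp only)
    rcases Nat.even_or_odd i with he | ho
    · obtain ⟨t, ht⟩ := he
      rw [if_pos (by omega : i % 2 = 0), if_neg (by omega : ¬ (i + 1) % 2 = 0)]
      have h4 : (i + 1) / 2 = i / 2 := by omega
      rw [h4]
      refine hh ⟨hvv', ?_, ?_⟩ <;> (dsimp only; omega)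
    · obtain ⟨t, ht⟩ := ho
      rw [if_neg (by omega : ¬ i % 2 = 0), if_pos (by omega : (i + 1) % 2 = 0)]
      refine hh ⟨G.symm hvv', ?_, ?_⟩ <;> (dsimp only [finClip]; omega)

def Realizable {G H : Graph'} (f : G.V → H.V) (v : G.V) (ω : Walk H (f v) (f v)) : Prop :=
  ∃ (n : ℕ) (h : (prodI G n).V → H.V) (hh : IsGraphHom (prodI G n) H h)
    (hs : ∀ x, h (x, finClip n 0) = f x) (he : ∀ x, h (x, finClip n n) = f x)
    (v' : G.V) (_ : G.E v v'),
    Eqv2 ω (realizedWalk h hh ‹G.E v v'› (hs v) (he v))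
def SquareFree (G : Graph') : Prop :=
  (∀ x, ¬ G.E x x) ∧
  ¬ ∃ a b c d : G.V, a ≠ b ∧ a ≠ c ∧ a ≠ d ∧ b ≠ c ∧ b ≠ d ∧ c ≠ d ∧
    G.E a b ∧ G.E b c ∧ G.E c d ∧ G.E d a

def nbhd (G : Graph') (v : G.V) : Set G.V := {y | G.E v y}

def nbhd2 (G : Graph') (v : G.V) : Set G.V := {z | ∃ y, G.E v y ∧ G.E y z}

def IsGraphCovering (G H : Graph') (p : G.V → H.V) : Prop :=
  IsGraphHom G H p ∧ ∀ v : G.V, Set.BijOn p (nbhd G v) (nbhd H (p v))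

def Is2CoveringMap (G H : Graph') (p : G.V → H.V) : Prop :=
  IsGraphHom G H p ∧ ∀ v : G.V,
    Set.BijOn p (nbhd G v) (nbhd H (p v)) ∧ Set.BijOn p (nbhd2 G v) (nbhd2 H (p v))

def pushforward {G H1 H2 : Graph'} (p : H1.V → H2.V) (hp : IsGraphHom H1 H2 p)
    (η : MultiHom G H1) : MultiHom G H2 where
  toFun x := p '' η.toFun x
  nonempty x := (η.nonempty x).image p
  edge := by
    rintro x y hxy a ⟨a', ha', rfl⟩ b ⟨b', hb', rfl⟩
    exact hp (η.edge hxy a' ha' b' hb')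

def IsCycleWalk {G : Graph'} {a : G.V} (γ : Walk G a a) : Prop :=
  3 ≤ γ.len ∧ ∀ i j, i < γ.len → j < γ.len → γ.toFun i = γ.toFun j → i = j

def IsTree (T : Graph') : Prop :=
  (∀ x, ¬ T.E x x) ∧ (∀ a b : T.V, Nonempty (Walk T a b)) ∧
    ∀ (a : T.V) (γ : Walk T a a), ¬ IsCycleWalk γ

def IsPath {G : Graph'} {a b : G.V} (γ : Walk G a b) : Prop :=
  ∀ i j, i ≤ γ.len → j ≤ γ.len → γ.toFun i = γ.toFun j → i = j

def OnWalk {G : Graph'} {a b : G.V} (γ : Walk G a b) (y : G.V) : Prop :=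
  ∃ i ≤ γ.len, γ.toFun i = y

def CrossHomotopic (G H : Graph') (f g : G.V → H.V) : Prop :=
  ∃ (n : ℕ) (h : (prodI G n).V → H.V), IsGraphHom (prodI G n) H h ∧
    (∀ x, h (x, finClip n 0) = f x) ∧ (∀ x, h (x, finClip n n) = g x)

def quotGraph (G : Graph') (Γ : Type) [Group Γ] [MulAction Γ G.V] : Graph' where
  V := Quotient (MulAction.orbitRel Γ G.V)
  E := fun α β => ∃ x y : G.V, Quotient.mk (MulAction.orbitRel Γ G.V) x = α ∧
        Quotient.mk (MulAction.orbitRel Γ G.V) y = β ∧ G.E x y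
  symm := by
    rintro α β ⟨x, y, hx, hy, hxy⟩
    exact ⟨y, x, hy, hx, G.symm hxy⟩
def DirEdge {G T : Graph'} (f : G.V → T.V) (n : ℕ) (η : MultiHom G T)
    (x x' : G.V) : Prop :=
  G.E x x' ∧ ∃ y ∈ η.toFun x, ∃ y' ∈ η.toFun x',
    T.dist (f x) y = 2 * n ∧ T.dist (f x') y' = 2 * n ∧
    ∀ Q : Walk T (f x') y', IsPath Q → OnWalk Q y

/- ---------- auxiliary infrastructure for statement_8 ---------- -/

def tS (T : Graph') : SimpleGraph T.V where
  Adj a b := a ≠ b ∧ T.E a b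
  symm := ⟨by rintro a b ⟨h1, h2⟩; exact ⟨h1.symm, T.symm h2⟩⟩
  loopless := ⟨by rintro a ⟨h, _⟩; exact h rfl⟩

lemma toAdj {T : Graph'} (hT : IsTree T) {a b : T.V} (h : T.E a b) : (tS T).Adj a b :=
  ⟨fun e => hT.1 b (e ▸ h), h⟩

def ofS {T : Graph'} {a b : T.V} (q : (tS T).Walk a b) : Walk T a b where
  len := q.length
  toFun := q.getVert
  start_eq := q.getVert_zero
  end_eq := q.getVert_length
  adj := fun i hi => (q.adj_getVert_succ hi).2

lemma onWalk_ofS {T : Graph'} {a b : T.V} (q : (tS T).Walk a b) (u : T.V) :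
    OnWalk (ofS q) u ↔ u ∈ q.support := by
  rw [SimpleGraph.Walk.mem_support_iff_exists_getVert]
  constructor
  · rintro ⟨i, hi, h⟩; exact ⟨i, h, hi⟩
  · rintro ⟨i, h, hi⟩; exact ⟨i, hi, h⟩

lemma getVert_inj_of_isPath {V : Type} {S : SimpleGraph V} {a b : V} (q : S.Walk a b)
    (hq : q.IsPath) : ∀ i j, i ≤ q.length → j ≤ q.length →
      q.getVert i = q.getVert j → i = j := by
  induction q with
  | nil => intro i j hi hj _; simp only [SimpleGraph.Walk.length_nil, Nat.le_zero] at hi hj; omega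
  | @cons u v w h p ih =>
    rw [SimpleGraph.Walk.cons_isPath_iff] at hq
    intro i j hi hj hij
    rw [SimpleGraph.Walk.length_cons] at hi hj
    match i, j with
    | 0, 0 => rfl
    | 0, j + 1 =>
      exfalso
      apply hq.2
      rw [SimpleGraph.Walk.mem_support_iff_exists_getVert]
      refine ⟨j, ?_, by omega⟩
      have := hij.symm
      rwa [SimpleGraph.Walk.getVert_cons_succ, SimpleGraph.Walk.getVert_zero] at this
    | i + 1, 0 =>
      exfalso
      apply hq.2
      rw [SimpleGraph.Walk.mem_support_iff_exists_getVert]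
      refine ⟨i, ?_, by omega⟩
      rwa [SimpleGraph.Walk.getVert_cons_succ, SimpleGraph.Walk.getVert_zero] at hij
    | i + 1, j + 1 =>
      rw [SimpleGraph.Walk.getVert_cons_succ, SimpleGraph.Walk.getVert_cons_succ] at hij
      have := ih hq.1 i j (by omega) (by omega) hij
      omega

lemma getVert_inj_of_isCycle {V : Type} {S : SimpleGraph V} {a : V} (q : S.Walk a a)
    (hq : q.IsCycle) : ∀ i j, i < q.length → j < q.length →
      q.getVert i = q.getVert j → i = j := by
  cases q with
  | nil => exact absurd rfl hq.ne_nil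
  | @cons u v w h p =>
    have hp : p.IsPath := by
      rw [SimpleGraph.Walk.isPath_def]
      have := hq.support_nodup
      simpa [SimpleGraph.Walk.support_cons] using this
    intro i j hi hj hij
    rw [SimpleGraph.Walk.length_cons] at hi hj
    match i, j with
    | 0, 0 => rfl
    | 0, j + 1 =>
      exfalso
      rw [SimpleGraph.Walk.getVert_cons_succ, SimpleGraph.Walk.getVert_zero] at hij
      have h2 : p.getVert j = p.getVert p.length := by
        rw [SimpleGraph.Walk.getVert_length, ← hij]
      have := getVert_inj_of_isPath p hp j p.length (by omega) le_rfl h2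
      omega
    | i + 1, 0 =>
      exfalso
      rw [SimpleGraph.Walk.getVert_cons_succ, SimpleGraph.Walk.getVert_zero] at hij
      have h2 : p.getVert i = p.getVert p.length := by
        rw [SimpleGraph.Walk.getVert_length, hij]
      have := getVert_inj_of_isPath p hp i p.length (by omega) le_rfl h2
      omega
    | i + 1, j + 1 =>
      rw [SimpleGraph.Walk.getVert_cons_succ, SimpleGraph.Walk.getVert_cons_succ] at hij
      have := getVert_inj_of_isPath p hp i j (by omega) (by omega) hij
      omega

lemma ofS_isPath {T : Graph'} {a b : T.V} (q : (tS T).Walk a b) (hq : q.IsPath) :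
    IsPath (ofS q) :=
  getVert_inj_of_isPath q hq

def toSAux (T : Graph') (fn : ℕ → T.V) :
    (k : ℕ) → (∀ i, i < k → (tS T).Adj (fn i) (fn (i + 1))) → (tS T).Walk (fn 0) (fn k)
  | 0, _ => SimpleGraph.Walk.nil
  | k + 1, h => (toSAux T fn k (fun i hi => h i (by omega))).concat (h k (by omega))

lemma toSAux_length (T : Graph') (fn : ℕ → T.V) (k : ℕ)
    (h : ∀ i, i < k → (tS T).Adj (fn i) (fn (i + 1))) : (toSAux T fn k h).length = k := by
  induction k with
  | zero => rfl
  | succ k ih => rw [toSAux, SimpleGraph.Walk.length_concat, ih]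

lemma toSAux_support (T : Graph') (fn : ℕ → T.V) (k : ℕ)
    (h : ∀ i, i < k → (tS T).Adj (fn i) (fn (i + 1))) :
    (toSAux T fn k h).support = (List.range (k + 1)).map fn := by
  induction k with
  | zero => rfl
  | succ k ih =>
    rw [toSAux, SimpleGraph.Walk.support_concat, ih, List.range_succ (n := k + 1),
      List.map_append]
    rfl

def toS {T : Graph'} (hT : IsTree T) {a b : T.V} (γ : Walk T a b) : (tS T).Walk a b :=
  (toSAux T γ.toFun γ.len (fun i hi => toAdj hT (γ.adj i hi))).copy γ.start_eq γ.end_eq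

lemma toS_length {T : Graph'} (hT : IsTree T) {a b : T.V} (γ : Walk T a b) :
    (toS hT γ).length = γ.len := by
  rw [toS, SimpleGraph.Walk.length_copy, toSAux_length]

lemma toS_support {T : Graph'} (hT : IsTree T) {a b : T.V} (γ : Walk T a b) :
    (toS hT γ).support = (List.range (γ.len + 1)).map γ.toFun := by
  rw [toS, SimpleGraph.Walk.support_copy, toSAux_support]

lemma mem_toS_support {T : Graph'} (hT : IsTree T) {a b : T.V} (γ : Walk T a b) (u : T.V) :
    u ∈ (toS hT γ).support ↔ ∃ i ≤ γ.len, γ.toFun i = u := by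
  rw [toS_support]
  simp only [List.mem_map, List.mem_range, Nat.lt_succ_iff]

lemma toS_isPath {T : Graph'} (hT : IsTree T) {a b : T.V} (γ : Walk T a b)
    (hγ : IsPath γ) : (toS hT γ).IsPath := by
  rw [SimpleGraph.Walk.isPath_def, toS_support]
  apply List.Nodup.map_on _ List.nodup_range
  intro i hi j hj hij
  rw [List.mem_range, Nat.lt_succ_iff] at hi hj
  exact hγ i j hi hj hij

lemma preS {T : Graph'} (hT : IsTree T) : (tS T).Preconnected :=
  fun u v => ⟨toS hT (hT.2.1 u v).some⟩

lemma acyclicS {T : Graph'} (hT : IsTree T) : (tS T).IsAcyclic := by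
  intro v c hc
  refine hT.2.2 v (ofS c) ⟨hc.three_le_length, ?_⟩
  exact getVert_inj_of_isCycle c hc

lemma dist_eqS {T : Graph'} (hT : IsTree T) (a b : T.V) : T.dist a b = (tS T).dist a b := by
  apply le_antisymm
  · obtain ⟨q, hq⟩ := (preS hT a b).exists_walk_length_eq_dist
    have : (ofS q).len = (tS T).dist a b := hq
    exact Nat.sInf_le ⟨ofS q, this⟩
  · have hne : {m | ∃ γ : Walk T a b, γ.len = m}.Nonempty := ⟨(hT.2.1 a b).some.len, _, rfl⟩
    obtain ⟨γ, hγ⟩ := Nat.sInf_mem hne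
    calc (tS T).dist a b ≤ (toS hT γ).length := SimpleGraph.dist_le _
      _ = γ.len := toS_length hT γ
      _ = T.dist a b := hγ

section TreeLemmas

variable {V : Type} [DecidableEq V] {S : SimpleGraph V} (hpre : S.Preconnected)
  (hu : ∀ ⦃u v : V⦄ (p q : S.Path u v), p = q)

include hpre hu

lemma exists_pathS (u v : V) : ∃ p : S.Walk u v, p.IsPath :=
  (hpre u v).elim fun q => ⟨q.bypass, q.bypass_isPath⟩

lemma path_len {u v : V} (p : S.Walk u v) (hp : p.IsPath) : p.length = S.dist u v := by
  obtain ⟨q, hq⟩ := (hpre u v).exists_walk_length_eq_dist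
  have h2 : (⟨p, hp⟩ : S.Path u v) = ⟨q.bypass, q.bypass_isPath⟩ := hu _ _
  have h3 : p = q.bypass := congrArg Subtype.val h2
  have h6 : p.length = q.bypass.length := by rw [h3]
  have h4 := q.length_bypass_le
  have h5 := SimpleGraph.dist_le p
  omega

lemma splitS {u v y : V} (p : S.Walk u v) (hp : p.IsPath) (hy : y ∈ p.support) :
    S.dist u y + S.dist y v = S.dist u v := by
  classical
  have l1 : (p.takeUntil y hy).length = S.dist u y := path_len hpre hu _ (hp.takeUntil hy)
  have l2 : (p.dropUntil y hy).length = S.dist y v := path_len hpre hu _ (hp.dropUntil hy)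
  have l3 : p.length = S.dist u v := path_len hpre hu _ hp
  have l4 : (p.takeUntil y hy).length + (p.dropUntil y hy).length = p.length := by
    rw [← SimpleGraph.Walk.length_append, SimpleGraph.Walk.take_spec]
  omega

lemma dist_adj_oneS {a b : V} (h : S.Adj a b) : S.dist a b = 1 := by
  have h1 : S.dist a b ≤ 1 := by
    have := SimpleGraph.dist_le (SimpleGraph.Walk.cons h SimpleGraph.Walk.nil)
    simpa using this
  have h2 : 0 < S.dist a b := h.reachable.pos_dist_of_ne h.ne
  omega

lemma dichotomyS {w v a : V} (p : S.Walk w v) (hp : p.IsPath) (ha : S.Adj a v) :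
    (a ∈ p.support ∧ S.dist w a + 1 = S.dist w v) ∨
    (a ∉ p.support ∧ S.dist w a = S.dist w v + 1) := by
  by_cases hm : a ∈ p.support
  · left
    have h1 := splitS hpre hu p hp hm
    have h2 := dist_adj_oneS hpre hu ha
    exact ⟨hm, by omega⟩
  · right
    refine ⟨hm, ?_⟩
    have hq : (SimpleGraph.Walk.cons ha p.reverse).IsPath := by
      rw [SimpleGraph.Walk.cons_isPath_iff]
      refine ⟨hp.reverse, ?_⟩
      rw [SimpleGraph.Walk.support_reverse, List.mem_reverse]
      exact hm
    have h1 := path_len hpre hu _ hq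
    rw [SimpleGraph.Walk.length_cons, SimpleGraph.Walk.length_reverse] at h1
    have h2 := path_len hpre hu p hp
    have h3 : S.dist a w = S.dist w a := SimpleGraph.dist_comm
    omega

lemma eq_of_memS {w v a y : V} (p : S.Walk w v) (hp : p.IsPath)
    (hma : a ∈ p.support) (hmy : y ∈ p.support) (hd : S.dist w a = S.dist w y) : a = y := by
  classical
  have hsa := splitS hpre hu p hp hma
  have hsy := splitS hpre hu p hp hmy
  have hy' : y ∈ ((p.takeUntil a hma).append (p.dropUntil a hma)).support := by
    rw [SimpleGraph.Walk.take_spec]; exact hmy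
  rw [SimpleGraph.Walk.mem_support_append_iff] at hy'
  rcases hy' with hy1 | hy2
  · have h1 := splitS hpre hu _ (hp.takeUntil hma) hy1
    have h2 : (p.takeUntil a hma).length = S.dist w a := path_len hpre hu _ (hp.takeUntil hma)
    have h3 : S.dist y a = 0 := by omega
    exact ((hpre y a).dist_eq_zero_iff.mp h3).symm
  · have h1 := splitS hpre hu _ (hp.dropUntil hma) hy2
    have h2 : (p.dropUntil a hma).length = S.dist a v := path_len hpre hu _ (hp.dropUntil hma)
    have h3 : S.dist a y = 0 := by omega
    exact (hpre a y).dist_eq_zero_iff.mp h3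

lemma keyS {w w' z' y : V} {n : ℕ} (hn : 1 ≤ n) (hww' : S.Adj w w')
    (p : S.Walk w' z') (hp : p.IsPath) (hdz : S.dist w' z' = 2 * n)
    (hy : y ∈ p.support) (hdy : S.dist w' y + 1 = 2 * n) (hwy : S.dist w y = 2 * n) :
    S.dist w z' = 2 * n + 1 := by
  classical
  have hc1 : S.dist z' w = S.dist w z' := SimpleGraph.dist_comm
  have hc2 : S.dist z' w' = S.dist w' z' := SimpleGraph.dist_comm
  rcases dichotomyS hpre hu p.reverse hp.reverse hww' with ⟨hmem, h2⟩ | ⟨_, h2⟩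
  · exfalso
    rw [SimpleGraph.Walk.support_reverse, List.mem_reverse] at hmem
    have hsw := splitS hpre hu p hp hmem
    have hww : S.dist w' w = 1 := by
      have : S.dist w' w + S.dist w z' = 2 * n := by rw [hsw, hdz]
      omega
    have hy' : y ∈ ((p.takeUntil w hmem).append (p.dropUntil w hmem)).support := by
      rw [SimpleGraph.Walk.take_spec]; exact hy
    rw [SimpleGraph.Walk.mem_support_append_iff] at hy'
    rcases hy' with hy1 | hy2
    · have h3 := splitS hpre hu _ (hp.takeUntil hmem) hy1
      have h4 : S.dist y w = 0 := by omega
      have h5 : y = w := (hpre y w).dist_eq_zero_iff.mp h4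
      rw [h5, SimpleGraph.dist_self] at hwy
      omega
    · have h3 := splitS hpre hu _ (hp.dropUntil hmem) hy2
      omega
  · omega

end TreeLemmas

/- ---------- end auxiliary infrastructure ---------- -/

theorem statement_8 (G T : Graph') (hT : IsTree T)
    (f : G.V → T.V) (hf : IsGraphHom G T f) (n : ℕ) (hn : 1 ≤ n)
    (η η' : MultiHom G T) (hle : MultiHom.le η η')
    (hbound : ∀ z : G.V, ∀ y ∈ η.toFun z, T.dist (f z) y ≤ 2 * n)
    (hbound' : ∀ z : G.V, ∀ y ∈ η'.toFun z, T.dist (f z) y ≤ 2 * n) :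
    (∀ x x' : G.V, DirEdge f n η x x' → DirEdge f n η' x x') ∧
    (∀ x x' x'' : G.V, DirEdge f n η' x x' → DirEdge f n η' x' x'' →
      DirEdge f n η x x') := by
  classical
  have hpre : (tS T).Preconnected := preS hT
  have hu : ∀ ⦃u v : T.V⦄ (p q : (tS T).Path u v), p = q :=
    SimpleGraph.isAcyclic_iff_path_unique.mp (acyclicS hT)
  constructor
  · rintro x x' ⟨hxx', y, hy, y', hy', d1, d2, hQ⟩
    exact ⟨hxx', y, hle x hy, y', hle x' hy', d1, d2, hQ⟩
  · rintro x x' x'' ⟨hxx', y, hy, y', hy', dwy, dw'y', Hy⟩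
      ⟨hx'x'', z', hz', z'', hz'', dw'z', dw''z'', Hz⟩
    rw [dist_eqS hT] at dwy dw'y' dw'z' dw''z''
    -- adjacencies
    have aww' : (tS T).Adj (f x) (f x') := toAdj hT (hf hxx')
    have aw'w'' : (tS T).Adj (f x') (f x'') := toAdj hT (hf hx'x'')
    have ayy' : (tS T).Adj y y' := toAdj hT (η'.edge hxx' y hy y' hy')
    have ayz' : (tS T).Adj y z' := toAdj hT (η'.edge hxx' y hy z' hz')
    have az'z'' : (tS T).Adj z' z'' := toAdj hT (η'.edge hx'x'' z' hz' z'' hz'')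
    -- paths
    obtain ⟨P1, hP1⟩ := exists_pathS hpre hu (f x') y'
    obtain ⟨P2, hP2⟩ := exists_pathS hpre hu (f x'') z''
    obtain ⟨Pz, hPz⟩ := exists_pathS hpre hu (f x') z'
    obtain ⟨Pw, hPw⟩ := exists_pathS hpre hu (f x) z'
    obtain ⟨Pq, hPq⟩ := exists_pathS hpre hu (f x') z''
    -- y on P1, distance of y from f x'
    have hyP1 : y ∈ P1.support := (onWalk_ofS P1 y).mp (Hy (ofS P1) (ofS_isPath P1 hP1))
    have dw'y : (tS T).dist (f x') y + 1 = 2 * n := by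
      have s1 := splitS hpre hu P1 hP1 hyP1
      have := dist_adj_oneS hpre hu ayy'
      omega
    -- z' on P2, distance of z' from f x''
    have hz'P2 : z' ∈ P2.support := (onWalk_ofS P2 z').mp (Hz (ofS P2) (ofS_isPath P2 hP2))
    have dw''z' : (tS T).dist (f x'') z' + 1 = 2 * n := by
      have s1 := splitS hpre hu P2 hP2 hz'P2
      have := dist_adj_oneS hpre hu az'z''
      omega
    -- y lies on the path from f x' to z'
    have hyPz : y ∈ Pz.support := by
      rcases dichotomyS hpre hu Pz hPz ayz' with ⟨hm, _⟩ | ⟨_, hcon⟩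
      · exact hm
      · omega
    -- key distances
    have dwz' : (tS T).dist (f x) z' = 2 * n + 1 :=
      keyS hpre hu hn aww' Pz hPz dw'z' hyPz dw'y dwy
    have dw'z'' : (tS T).dist (f x') z'' = 2 * n + 1 :=
      keyS hpre hu hn aw'w'' P2 hP2 dw''z'' hz'P2 dw''z' dw'z'
    -- η x = {y}
    obtain ⟨a, ha⟩ := η.nonempty x
    have haz' : (tS T).Adj a z' := toAdj hT (η'.edge hxx' a (hle x ha) z' hz')
    have hba : (tS T).dist (f x) a ≤ 2 * n := by
      have := hbound x a ha; rwa [dist_eqS hT] at this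
    have hyη : y ∈ η.toFun x := by
      rcases dichotomyS hpre hu Pw hPw haz' with ⟨hmA, hdA⟩ | ⟨_, hcon⟩
      · rcases dichotomyS hpre hu Pw hPw ayz' with ⟨hmY, hdY⟩ | ⟨_, hcon⟩
        · have : a = y := eq_of_memS hpre hu Pw hPw hmA hmY (by omega)
          exact this ▸ ha
        · omega
      · omega
    -- z' ∈ η x'
    obtain ⟨b, hb⟩ := η.nonempty x'
    have hbz'' : (tS T).Adj b z'' := toAdj hT (η'.edge hx'x'' b (hle x' hb) z'' hz'')
    have hbb : (tS T).dist (f x') b ≤ 2 * n := by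
      have := hbound x' b hb; rwa [dist_eqS hT] at this
    have hz'η : z' ∈ η.toFun x' := by
      rcases dichotomyS hpre hu Pq hPq hbz'' with ⟨hmB, hdB⟩ | ⟨_, hcon⟩
      · rcases dichotomyS hpre hu Pq hPq az'z'' with ⟨hmZ, hdZ⟩ | ⟨_, hcon⟩
        · have : b = z' := eq_of_memS hpre hu Pq hPq hmB hmZ (by omega)
          exact this ▸ hb
        · omega
      · omega
    -- conclusion
    refine ⟨hxx', y, hyη, z', hz'η, ?_, ?_, ?_⟩
    · rw [dist_eqS hT]; exact dwy
    · rw [dist_eqS hT]; exact dw'z'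
    · intro Q hQ
      have hQS : (toS hT Q).IsPath := toS_isPath hT Q hQ
      have hEq : (⟨toS hT Q, hQS⟩ : (tS T).Path (f x') z') = ⟨Pz, hPz⟩ := hu _ _
      have hmem : y ∈ (toS hT Q).support := by
        rw [show toS hT Q = Pz from congrArg Subtype.val hEq]
        exact hyPz
      exact (mem_toS_support hT Q y).mp hmem
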